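/- arXiv:1511.07990 — 2 statements merged into one kernel-verified Lean document; each statement's English description precedes it below -/
import Mathlib

section
/- Every loose odd wheel is not t-perfect. -/
open Finset SimpleGraph

namespace TPerfection

variable {V : Type*}

/-- A stable (independent) set of vertices: pairwise non-adjacent. -/
def IsStableSet (G : SimpleGraph V) (S : Finset V) : Prop :=
  ∀ u ∈ S, ∀ v ∈ S, ¬ G.Adj u v

/-- STAB(G): convex hull of incidence vectors of stable sets. -/
def stabPolytope (G : SimpleGraph V) [Fintype V] [DecidableEq V] : Set (V → ℝ) :=
  convexHull ℝ { x | ∃ S : Finset V, IsStableSet G S ∧ x = fun v => if v ∈ S then (1 : ℝ) else 0 }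

/-- `c` is an induced (chordless) cycle of `G`. -/
def IsInducedCycle (G : SimpleGraph V) {u : V} (c : G.Walk u u) : Prop :=
  c.IsCycle ∧ ∀ x y : V, x ∈ c.support → y ∈ c.support → G.Adj x y → s(x, y) ∈ c.edges

def boxConstraints (x : V → ℝ) : Prop := ∀ v, 0 ≤ x v ∧ x v ≤ 1

def edgeConstraints (G : SimpleGraph V) (x : V → ℝ) : Prop :=
  ∀ u v : V, G.Adj u v → x u + x v ≤ 1

def cliqueConstraints (G : SimpleGraph V) (x : V → ℝ) : Prop :=
  ∀ K : Finset V, G.IsClique (K : Set V) → ∑ v ∈ K, x v ≤ 1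

def oddCycleConstraints [DecidableEq V] (G : SimpleGraph V) (x : V → ℝ) : Prop :=
  ∀ (u : V) (c : G.Walk u u), IsInducedCycle G c → Odd c.length →
    ∑ v ∈ c.support.toFinset, x v ≤ ((c.length : ℝ) - 1) / 2

/-- Solution set of box, edge and odd-cycle constraints. -/
def tPolytope (G : SimpleGraph V) [DecidableEq V] : Set (V → ℝ) :=
  { x | boxConstraints x ∧ edgeConstraints G x ∧ oddCycleConstraints G x }

/-- Solution set of box, clique and odd-cycle constraints. -/
def hPolytope (G : SimpleGraph V) [DecidableEq V] : Set (V → ℝ) :=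
  { x | boxConstraints x ∧ cliqueConstraints G x ∧ oddCycleConstraints G x }

/-- Solution set of box and clique constraints. -/
def qstabPolytope (G : SimpleGraph V) : Set (V → ℝ) :=
  { x | boxConstraints x ∧ cliqueConstraints G x }

def TPerfect (G : SimpleGraph V) [Fintype V] [DecidableEq V] : Prop :=
  tPolytope G = stabPolytope G

def HPerfect (G : SimpleGraph V) [Fintype V] [DecidableEq V] : Prop :=
  hPolytope G = stabPolytope G

/-- The clique number, as an extended natural number. -/
noncomputable def cliqueNumber (G : SimpleGraph V) : ℕ∞ :=
  sSup ((fun n : ℕ => (n : ℕ∞)) '' { n | ∃ K : Finset V, G.IsNClique n K })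

/-- A graph is perfect if every induced subgraph has chromatic number equal to
clique number. -/
def IsPerfect (G : SimpleGraph V) : Prop :=
  ∀ S : Set V, (G.induce S).chromaticNumber = cliqueNumber (G.induce S)

/-- `G` is a loose wheel with hub `hub` and rim `c`: `c` is a cycle, `hub` lies outside
of it and has at least three neighbours on it, and the rim together with the hub
comprise all vertices and edges of `G`. -/
structure IsLooseWheel (G : SimpleGraph V) (hub : V) {u : V} (c : G.Walk u u) : Prop where
  isCycle : c.IsCycle
  hub_not_mem : hub ∉ c.support
  spokes : ∃ w₁ w₂ w₃ : V, w₁ ∈ c.support ∧ w₂ ∈ c.support ∧ w₃ ∈ c.support ∧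
    w₁ ≠ w₂ ∧ w₁ ≠ w₃ ∧ w₂ ≠ w₃ ∧ G.Adj hub w₁ ∧ G.Adj hub w₂ ∧ G.Adj hub w₃
  vertex_cover : ∀ w : V, w ∈ c.support ∨ w = hub
  edge_cover : ∀ x y : V, G.Adj x y → s(x, y) ∈ c.edges ∨ x = hub ∨ y = hub

/-- A segment of a loose wheel: a path of the rim joining two neighbours of the hub
and containing no other neighbour of the hub. -/
def IsSegment (G : SimpleGraph V) (hub : V) {u : V} (c : G.Walk u u)
    {a b : V} (p : G.Walk a b) : Prop :=
  p.IsPath ∧ a ≠ b ∧ G.Adj hub a ∧ G.Adj hub b ∧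
    (∀ e ∈ p.edges, e ∈ c.edges) ∧
    (∀ w ∈ p.support, G.Adj hub w → w = a ∨ w = b)

/-- `G` is a loose odd wheel: a loose wheel with odd rim having at least three
(pairwise distinct, hence pairwise edge-disjoint) segments of odd length. -/
def IsLooseOddWheel [DecidableEq V] (G : SimpleGraph V) : Prop :=
  ∃ (hub u : V) (c : G.Walk u u), IsLooseWheel G hub c ∧ Odd c.length ∧
    ∃ (a₁ b₁ : V) (p₁ : G.Walk a₁ b₁) (a₂ b₂ : V) (p₂ : G.Walk a₂ b₂)
      (a₃ b₃ : V) (p₃ : G.Walk a₃ b₃),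
      IsSegment G hub c p₁ ∧ IsSegment G hub c p₂ ∧ IsSegment G hub c p₃ ∧
      Odd p₁.length ∧ Odd p₂.length ∧ Odd p₃.length ∧
      Disjoint p₁.edges.toFinset p₂.edges.toFinset ∧
      Disjoint p₁.edges.toFinset p₃.edges.toFinset ∧
      Disjoint p₂.edges.toFinset p₃.edges.toFinset

/-- The neighbourhood of `v` is a stable set. -/
def StableNeighborhood (G : SimpleGraph V) (v : V) : Prop :=
  ∀ x y : V, G.Adj v x → G.Adj v y → ¬ G.Adj x y

/-- The t-contraction of `G` at `v`: delete `{v} ∪ N(v)` and add a new vertex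
(`none`) adjacent exactly to the remaining vertices having a neighbour in `N(v)`. -/
def tContract (G : SimpleGraph V) (v : V) :
    SimpleGraph (Option { w : V // w ≠ v ∧ ¬ G.Adj v w }) where
  Adj x y :=
    match x, y with
    | none, none => False
    | none, some b => ∃ n, G.Adj v n ∧ G.Adj b.1 n
    | some a, none => ∃ n, G.Adj v n ∧ G.Adj a.1 n
    | some a, some b => G.Adj a.1 b.1
  symm := by
    constructor
    rintro (_ | a) (_ | b) h
    · exact h
    · exact h
    · exact h
    · exact h.symm
  loopless := by
    constructor
    rintro (_ | a) h
    · exact h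
    · exact G.irrefl h

/-- The wheel with hub `none` and rim the cycle of length `k` on `Fin k`. -/
def wheelGraph (k : ℕ) : SimpleGraph (Option (Fin k)) where
  Adj x y :=
    match x, y with
    | none, none => False
    | none, some _ => True
    | some _, none => True
    | some i, some j => i ≠ j ∧ ((i.1 + 1) % k = j.1 ∨ (j.1 + 1) % k = i.1)
  symm := by
    constructor
    rintro (_ | i) (_ | j) h
    · exact h
    · trivial
    · trivial
    · exact ⟨h.1.symm, h.2.symm⟩
  loopless := by
    constructor
    rintro (_ | i) h
    · exact h
    · exact h.1 rfl

/-- One step of t-contraction between (isomorphism classes of) graphs. -/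
def TContractStep : (Σ α : Type, SimpleGraph α) → (Σ α : Type, SimpleGraph α) → Prop :=
  fun G H => ∃ v : G.1, StableNeighborhood G.2 v ∧ Nonempty (H.2 ≃g tContract G.2 v)


section Helpers

variable {V : Type*} {G : SimpleGraph V}

lemma walk_support_eq_map {a b : V} (p : G.Walk a b) :
    p.support = (List.range (p.length + 1)).map p.getVert := by
  induction p with
  | nil => simp [List.range_succ]
  | @cons u w b h q ih =>
    rw [Walk.support_cons, ih, Walk.length_cons]
    conv_rhs => rw [List.range_succ_eq_map]
    rw [List.map_cons, List.map_map, Walk.getVert_zero]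
    congr 1

lemma walk_index_edge {a b : V} (p : G.Walk a b) :
    ∀ i < p.length, s(p.getVert i, p.getVert (i + 1)) ∈ p.edges := by
  induction p with
  | nil => intro i hi; simp at hi
  | @cons u w b h q ih =>
    intro i hi
    rw [Walk.edges_cons]
    cases i with
    | zero =>
      have h0 : (Walk.cons h q).getVert 0 = u := Walk.getVert_zero _
      have h1 : (Walk.cons h q).getVert (0 + 1) = w := by
        rw [Walk.getVert_cons_succ]; exact q.getVert_zero
      rw [h0, h1]
      exact List.mem_cons_self
    | succ n =>
      rw [Walk.getVert_cons_succ, Walk.getVert_cons_succ]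
      exact List.mem_cons_of_mem _ (ih n (by rw [Walk.length_cons] at hi; omega))

lemma walk_edge_index {a b : V} (p : G.Walk a b) {e : Sym2 V} (he : e ∈ p.edges) :
    ∃ i < p.length, e = s(p.getVert i, p.getVert (i + 1)) := by
  induction p with
  | nil => simp at he
  | @cons u w b h q ih =>
    rw [Walk.edges_cons, List.mem_cons] at he
    rcases he with he | he
    · refine ⟨0, by rw [Walk.length_cons]; omega, ?_⟩
      have h0 : (Walk.cons h q).getVert 0 = u := Walk.getVert_zero _
      have h1 : (Walk.cons h q).getVert (0 + 1) = w := by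
        rw [Walk.getVert_cons_succ]; exact q.getVert_zero
      rw [h0, h1]; exact he
    · obtain ⟨i, hi, hie⟩ := ih he
      refine ⟨i + 1, by rw [Walk.length_cons]; omega, ?_⟩
      rw [Walk.getVert_cons_succ, Walk.getVert_cons_succ]; exact hie

lemma walk_end_mem_support_tail {a b : V} (p : G.Walk a b) (hp : 0 < p.length) :
    b ∈ p.support.tail := by
  cases p with
  | nil => simp at hp
  | cons h q => simpa using q.end_mem_support

/-- In an odd-length walk whose endpoints avoid `S`, where `S` contains no
adjacent pair, there is an edge with both endpoints outside `S`. -/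
lemma exists_edge_avoiding (S : Finset V)
    (hS : ∀ u v, u ∈ S → v ∈ S → ¬ G.Adj u v) :
    ∀ n : ℕ, ∀ {a b : V} (p : G.Walk a b), p.length = n → Odd n → a ∉ S → b ∉ S →
      ∃ u v, s(u, v) ∈ p.edges ∧ u ∉ S ∧ v ∉ S := by
  intro n
  induction n using Nat.strong_induction_on with
  | _ n IH =>
    intro a b p hn hodd ha hb
    cases p with
    | nil =>
      rw [Walk.length_nil] at hn
      rw [← hn] at hodd
      exact absurd hodd (by decide)
    | @cons u w b h q =>
      by_cases hw : w ∈ S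
      · cases q with
        | nil => exact absurd hw hb
        | @cons w z b h' r =>
          have hz : z ∉ S := fun hz => hS w z hw hz h'
          have hn' : n = r.length + 2 := by
            rw [Walk.length_cons, Walk.length_cons] at hn; omega
          obtain ⟨m, hm⟩ := hodd
          have h2 : Odd (n - 2) := ⟨m - 1, by omega⟩
          obtain ⟨u', v', huv, hu', hv'⟩ :=
            IH (n - 2) (by omega) r (by omega) h2 hz hb
          exact ⟨u', v', List.mem_cons_of_mem _ (List.mem_cons_of_mem _ huv), hu', hv'⟩
      · exact ⟨a, w, by rw [Walk.edges_cons]; exact List.mem_cons_self, ha, hw⟩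

/-- For a cycle, `getVert` is injective on `[1, length]`. -/
lemma cycle_getVert_injOn {a : V} {c : G.Walk a a} (hc : c.IsCycle) :
    ∀ i j, 1 ≤ i → i ≤ c.length → 1 ≤ j → j ≤ c.length →
      c.getVert i = c.getVert j → i = j := by
  intro i j hi1 hiL hj1 hjL hij
  have htail : c.support.tail = (List.range c.length).map (fun n => c.getVert (n + 1)) := by
    rw [walk_support_eq_map c, List.range_succ_eq_map]
    simp [List.map_map, Function.comp]
  have hnodup : c.support.tail.Nodup := hc.support_nodup
  rw [htail] at hnodup
  have key := List.inj_on_of_nodup_map hnodup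
    (x := i - 1) (by rw [List.mem_range]; omega)
    (y := j - 1) (by rw [List.mem_range]; omega)
    (by rw [Nat.sub_add_cancel hi1, Nat.sub_add_cancel hj1]; exact hij)
  omega

end Helpers

/-- Every loose odd wheel is not t-perfect. -/
theorem looseOddWheel_not_tPerfect {V : Type*} [Fintype V] [DecidableEq V]
    (G : SimpleGraph V) (h : IsLooseOddWheel G) :
    ¬ TPerfect G := by
  obtain ⟨hub, u, c, hw, hkodd, a₁, b₁, p₁, a₂, b₂, p₂, a₃, b₃, p₃,
    hs₁, hs₂, hs₃, ho₁, ho₂, ho₃, hd₁₂, hd₁₃, hd₂₃⟩ := h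
  intro hTP
  have hcyc : c.IsCycle := hw.isCycle
  set k := c.length with hkdef
  have hk3 : 3 ≤ k := hcyc.three_le_length
  haveI : NeZero k := ⟨by omega⟩
  haveI : Fact (1 < k) := ⟨by omega⟩
  set g : ZMod k → V := fun i => c.getVert i.val with hgdef
  have hvallt : ∀ i : ZMod k, i.val < k := fun i => ZMod.val_lt i
  have hgu : c.getVert k = u := Walk.getVert_length c
  -- injectivity of g
  have hkey : ∀ m : ZMod k, c.getVert (if m.val = 0 then k else m.val) = g m := by
    intro m
    by_cases h0 : m.val = 0
    · rw [if_pos h0, hgu, hgdef]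
      simp only [h0, Walk.getVert_zero]
    · rw [if_neg h0]
  have hginj : ∀ i j : ZMod k, g i = g j → i = j := by
    intro i j hij
    have hi := hvallt i; have hj := hvallt j
    have heq := cycle_getVert_injOn hcyc (if i.val = 0 then k else i.val)
      (if j.val = 0 then k else j.val)
      (by split <;> omega) (by split <;> omega) (by split <;> omega) (by split <;> omega)
      (by rw [hkey, hkey, hij])
    apply ZMod.val_injective
    by_cases h0i : i.val = 0 <;> by_cases h0j : j.val = 0 <;>
      simp only [h0i, h0j, if_pos, if_neg, if_true, if_false] at heq <;> omega
  -- adjacency along g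
  have hgadj : ∀ i : ZMod k, G.Adj (g i) (g (i + 1)) := by
    intro i
    have h1 : (i + 1).val = (i.val + 1) % k := by
      rw [ZMod.val_add, ZMod.val_one]
    have h2 : g (i + 1) = c.getVert (i.val + 1) := by
      by_cases hlast : i.val + 1 = k
      · rw [hgdef]
        simp only
        rw [h1, hlast, Nat.mod_self, Walk.getVert_zero]
        exact hgu.symm
      · rw [hgdef]
        simp only
        rw [h1, Nat.mod_eq_of_lt (by have := hvallt i; omega)]
    rw [h2]
    exact c.adj_getVert_succ (hvallt i)
  -- surjectivity onto the rim
  have hgsurj : ∀ v ∈ c.support, ∃ i : ZMod k, g i = v := by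
    intro v hv
    rw [Walk.mem_support_iff_exists_getVert] at hv
    obtain ⟨n, hnv, hn⟩ := hv
    refine ⟨(n : ZMod k), ?_⟩
    rw [hgdef]
    simp only
    by_cases hnk : n = k
    · subst hnk
      rw [ZMod.natCast_self, ZMod.val_zero, Walk.getVert_zero]
      rw [← hnv, hgu]
    · rw [ZMod.val_cast_of_lt (by omega)]
      exact hnv
  -- rim membership of g
  have hgmem : ∀ i : ZMod k, g i ∈ c.support := by
    intro i
    rw [Walk.mem_support_iff_exists_getVert]
    exact ⟨i.val, rfl, (hvallt i).le⟩
  have hgnehub : ∀ i : ZMod k, g i ≠ hub := fun i hi => hw.hub_not_mem (hi ▸ hgmem i)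
  -- every rim edge has the form s(g (j-1), g j)
  have hedge : ∀ e ∈ c.edges, ∃ j : ZMod k, e = s(g (j - 1), g j) := by
    intro e he
    obtain ⟨n, hn, hne⟩ := walk_edge_index c he
    refine ⟨(n : ZMod k) + 1, ?_⟩
    have hv1 : ((n : ZMod k) + 1 - 1) = (n : ZMod k) := by ring
    rw [hv1]
    have h1 : g (n : ZMod k) = c.getVert n := by
      rw [hgdef]; simp only; rw [ZMod.val_cast_of_lt hn]
    have h2 : g ((n : ZMod k) + 1) = c.getVert (n + 1) := by
      have hcast : ((n : ZMod k) + 1) = ((n + 1 : ℕ) : ZMod k) := by push_cast; ring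
      rw [hgdef]; simp only; rw [hcast]
      by_cases hnk : n + 1 = k
      · rw [hnk, ZMod.natCast_self, ZMod.val_zero, Walk.getVert_zero, ← hnk,
          show c.getVert (n + 1) = u from hnk ▸ hgu]
      · rw [ZMod.val_cast_of_lt (by omega)]
    rw [h1, h2]
    exact hne
  -- the rim as a finset
  set R : Finset V := Finset.image g Finset.univ with hRdef
  have hRcard : R.card = k := by
    rw [hRdef, Finset.card_image_of_injective _ hginj, Finset.card_univ, ZMod.card]
  have hhubR : hub ∉ R := by
    rw [hRdef]
    simp only [Finset.mem_image, Finset.mem_univ, true_and, not_exists]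
    exact fun i hi => hgnehub i hi
  have hunivR : (Finset.univ : Finset V) = insert hub R := by
    ext v
    simp only [Finset.mem_univ, true_iff, Finset.mem_insert]
    rcases hw.vertex_cover v with hv | hv
    · right
      obtain ⟨i, hi⟩ := hgsurj v hv
      exact hRdef ▸ Finset.mem_image.mpr ⟨i, Finset.mem_univ _, hi⟩
    · left; exact hv
  -- counting stable sets avoiding the hub
  have hTbound : ∀ S : Finset V, (∀ x y, x ∈ S → y ∈ S → ¬ G.Adj x y) → hub ∉ S →
      S.card = ((Finset.univ : Finset (ZMod k)).filter (fun i => g i ∈ S)).card ∧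
      Disjoint ((Finset.univ : Finset (ZMod k)).filter (fun i => g i ∈ S))
        (((Finset.univ : Finset (ZMod k)).filter (fun i => g i ∈ S)).image (· + 1)) := by
    intro S hS hhub
    constructor
    · have hSim : S = (Finset.univ.filter (fun i => g i ∈ S)).image g := by
        ext v
        simp only [Finset.mem_image, Finset.mem_filter, Finset.mem_univ, true_and]
        constructor
        · intro hv
          have hvc : v ∈ c.support := by
            rcases hw.vertex_cover v with h' | h'
            · exact h'
            · exact absurd (h' ▸ hv) hhub
          obtain ⟨i, hi⟩ := hgsurj v hvc
          exact ⟨i, hi ▸ hv, hi⟩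
        · rintro ⟨i, hiS, rfl⟩; exact hiS
      conv_lhs => rw [hSim]
      rw [Finset.card_image_of_injective _ hginj]
    · rw [Finset.disjoint_left]
      intro i hiT hiT'
      simp only [Finset.mem_image, Finset.mem_filter, Finset.mem_univ, true_and] at hiT hiT'
      obtain ⟨t, htS, hti⟩ := hiT'
      exact hS _ _ htS hiT (hti ▸ hgadj t)
  have hTcount : ∀ S : Finset V, (∀ x y, x ∈ S → y ∈ S → ¬ G.Adj x y) → hub ∉ S →
      2 * S.card ≤ k := by
    intro S hS hhub
    obtain ⟨hcardeq, hdisj⟩ := hTbound S hS hhub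
    set T := (Finset.univ : Finset (ZMod k)).filter (fun i => g i ∈ S)
    have himcard : (T.image (· + 1)).card = T.card :=
      Finset.card_image_of_injective _ (add_left_injective 1)
    have hle : (T ∪ T.image (· + 1)).card ≤ k := by
      calc (T ∪ T.image (· + 1)).card ≤ (Finset.univ : Finset (ZMod k)).card :=
            Finset.card_le_card (Finset.subset_univ _)
        _ = k := by rw [Finset.card_univ, ZMod.card]
    rw [Finset.card_union_of_disjoint hdisj, himcard] at hle
    omega
  -- the main combinatorial bound on stable sets
  have hstab : ∀ S : Finset V, IsStableSet G S → 2 * S.card ≤ k - 1 := by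
    intro S hSstable
    have hS : ∀ x y, x ∈ S → y ∈ S → ¬ G.Adj x y := fun x y hx hy => hSstable x hx y hy
    by_cases hhubS : hub ∈ S
    · -- hub is in S; use the three odd segments
      set S' := S.erase hub with hS'def
      have hS'sub : S' ⊆ S := Finset.erase_subset _ _
      have hS'stable : ∀ x y, x ∈ S' → y ∈ S' → ¬ G.Adj x y :=
        fun x y hx hy => hS x y (hS'sub hx) (hS'sub hy)
      have hhubS' : hub ∉ S' := Finset.notMem_erase _ _
      obtain ⟨hcardeq, hdisj⟩ := hTbound S' hS'stable hhubS'
      set T := (Finset.univ : Finset (ZMod k)).filter (fun i => g i ∈ S') with hTdef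
      -- find a slot for each segment
      have hslot : ∀ {a b : V} (p : G.Walk a b), IsSegment G hub c p → Odd p.length →
          ∃ j : ZMod k, g (j - 1) ∉ S ∧ g j ∉ S ∧ s(g (j - 1), g j) ∈ p.edges := by
        intro a b p hseg hop
        have ha : a ∉ S := fun haS => hS hub a hhubS haS hseg.2.2.1
        have hb : b ∉ S := fun hbS => hS hub b hhubS hbS hseg.2.2.2.1
        obtain ⟨x, y, hxy, hx, hy⟩ := exists_edge_avoiding S hS p.length p rfl hop ha hb
        have hxyc : s(x, y) ∈ c.edges := hseg.2.2.2.2.1 _ hxy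
        obtain ⟨j, hj⟩ := hedge _ hxyc
        rcases Sym2.eq_iff.mp hj with ⟨hx', hy'⟩ | ⟨hx', hy'⟩
        · exact ⟨j, hx' ▸ hx, hy' ▸ hy, hj ▸ hxy⟩
        · exact ⟨j, hy' ▸ hy, hx' ▸ hx, hj ▸ hxy⟩
      obtain ⟨j₁, hj₁l, hj₁r, hj₁e⟩ := hslot p₁ hs₁ ho₁
      obtain ⟨j₂, hj₂l, hj₂r, hj₂e⟩ := hslot p₂ hs₂ ho₂
      obtain ⟨j₃, hj₃l, hj₃r, hj₃e⟩ := hslot p₃ hs₃ ho₃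
      have hne12 : j₁ ≠ j₂ := by
        intro hjj
        exact Finset.disjoint_left.mp hd₁₂ (List.mem_toFinset.mpr hj₁e)
          (List.mem_toFinset.mpr (by rw [hjj]; exact hj₂e))
      have hne13 : j₁ ≠ j₃ := by
        intro hjj
        exact Finset.disjoint_left.mp hd₁₃ (List.mem_toFinset.mpr hj₁e)
          (List.mem_toFinset.mpr (by rw [hjj]; exact hj₃e))
      have hne23 : j₂ ≠ j₃ := by
        intro hjj
        exact Finset.disjoint_left.mp hd₂₃ (List.mem_toFinset.mpr hj₂e)
          (List.mem_toFinset.mpr (by rw [hjj]; exact hj₃e))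
      have hjnot : ∀ j : ZMod k, g (j - 1) ∉ S → g j ∉ S → j ∉ T ∪ T.image (· + 1) := by
        intro j hl hr hmem
        rcases Finset.mem_union.mp hmem with hm | hm
        · rw [hTdef] at hm
          simp only [Finset.mem_filter, Finset.mem_univ, true_and] at hm
          exact hr (hS'sub hm)
        · simp only [Finset.mem_image, hTdef, Finset.mem_filter, Finset.mem_univ,
            true_and] at hm
          obtain ⟨t, htS, hti⟩ := hm
          have : t = j - 1 := by rw [← hti]; ring
          exact hl (this ▸ hS'sub htS)
      have hsub : T ∪ T.image (· + 1) ⊆ Finset.univ \ {j₁, j₂, j₃} := by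
        intro i hi
        rw [Finset.mem_sdiff]
        refine ⟨Finset.mem_univ _, ?_⟩
        intro hmem
        simp only [Finset.mem_insert, Finset.mem_singleton] at hmem
        rcases hmem with rfl | rfl | rfl
        · exact hjnot _ hj₁l hj₁r hi
        · exact hjnot _ hj₂l hj₂r hi
        · exact hjnot _ hj₃l hj₃r hi
      have hcard3 : ({j₁, j₂, j₃} : Finset (ZMod k)).card = 3 := by
        rw [Finset.card_insert_of_notMem (by simp [hne12, hne13]),
          Finset.card_insert_of_notMem (by simp [hne23]), Finset.card_singleton]
      have hle : (T ∪ T.image (· + 1)).card ≤ k - 3 := by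
        calc (T ∪ T.image (· + 1)).card ≤ (Finset.univ \ {j₁, j₂, j₃}).card :=
              Finset.card_le_card hsub
          _ = k - 3 := by
              rw [Finset.card_sdiff_of_subset (Finset.subset_univ _), Finset.card_univ, ZMod.card, hcard3]
      have himcard : (T.image (· + 1)).card = T.card :=
        Finset.card_image_of_injective _ (add_left_injective 1)
      rw [Finset.card_union_of_disjoint hdisj, himcard] at hle
      have hScard : S'.card + 1 = S.card := Finset.card_erase_add_one hhubS
      omega
    · -- hub not in S
      have := hTcount S hS hhubS
      rw [Nat.odd_iff] at hkodd
      omega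
  -- the point x
  set x : V → ℝ := fun v => if v = hub then 1 / (k : ℝ) else ((k : ℝ) - 1) / (2 * k) with hxdef
  have hkR : (3 : ℝ) ≤ (k : ℝ) := by exact_mod_cast hk3
  have hkpos : (0 : ℝ) < (k : ℝ) := by linarith
  have hhalf1 : 1 / (k : ℝ) ≤ 1 / 2 := by
    rw [div_le_div_iff₀ hkpos (by norm_num)]; linarith
  have hhalf2 : ((k : ℝ) - 1) / (2 * k) ≤ 1 / 2 := by
    rw [div_le_div_iff₀ (by linarith) (by norm_num)]; linarith
  have hxvals : ∀ v : V, x v = 1 / (k : ℝ) ∨ x v = ((k : ℝ) - 1) / (2 * k) := by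
    intro v
    simp only [hxdef]
    by_cases hv : v = hub
    · left; rw [if_pos hv]
    · right; rw [if_neg hv]
  -- x lies in the t-polytope
  have hxtp : x ∈ tPolytope G := by
    refine ⟨?_, ?_, ?_⟩
    · -- box constraints
      intro v
      rcases hxvals v with hv | hv <;> rw [hv]
      · exact ⟨by positivity, by linarith⟩
      · exact ⟨div_nonneg (by linarith) (by linarith), by linarith⟩
    · -- edge constraints
      intro v w hvw
      rcases hxvals v with hv | hv <;> rcases hxvals w with hw' | hw' <;>
        rw [hv, hw'] <;> linarith
    · -- odd cycle constraints
      intro u' c' hic hodd'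
      set L := c'.length with hLdef
      have hcyc' : c'.IsCycle := hic.1
      have hL3 : 3 ≤ L := hcyc'.three_le_length
      have hLR : (3 : ℝ) ≤ (L : ℝ) := by exact_mod_cast hL3
      set F := c'.support.toFinset with hFdef
      have hutail : u' ∈ c'.support.tail := walk_end_mem_support_tail c' (by omega)
      have hFtail : F = c'.support.tail.toFinset := by
        rw [hFdef]
        conv_lhs => rw [Walk.support_eq_cons]
        rw [List.toFinset_cons, Finset.insert_eq_self.mpr (List.mem_toFinset.mpr hutail)]
      have hFcard : F.card = L := by
        rw [hFtail, List.toFinset_card_of_nodup hcyc'.support_nodup, List.length_tail,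
          Walk.length_support]
        omega
      by_cases hhubF : hub ∈ F
      · -- the cycle goes through the hub
        have hsum : ∑ v ∈ F, x v = 1 / (k : ℝ) + (L - 1) * (((k : ℝ) - 1) / (2 * k)) := by
          rw [← Finset.add_sum_erase _ _ hhubF]
          have hxhub : x hub = 1 / (k : ℝ) := by simp [hxdef]
          have herase : ∀ v ∈ F.erase hub, x v = ((k : ℝ) - 1) / (2 * k) := by
            intro v hv
            simp only [hxdef]
            exact if_neg (Finset.ne_of_mem_erase hv)
          rw [hxhub, Finset.sum_congr rfl herase, Finset.sum_const,
            Finset.card_erase_of_mem hhubF, hFcard, nsmul_eq_mul]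
          have : ((L - 1 : ℕ) : ℝ) = (L : ℝ) - 1 := by
            rw [Nat.cast_sub (by omega)]; norm_num
          rw [this]
        rw [hsum, mul_div_assoc',
          div_add_div _ _ hkpos.ne' (ne_of_gt (by linarith : (0:ℝ) < 2 * k)),
          div_le_div_iff₀ (by nlinarith) (by norm_num)]
        nlinarith [mul_nonneg hkpos.le (by linarith : (0:ℝ) ≤ (L:ℝ) - 3)]
      · -- the cycle avoids the hub: it must contain the whole rim
        have hhubsupp : hub ∉ c'.support := fun hh => hhubF (List.mem_toFinset.mpr hh)
        have hRF : R ⊆ F := by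
          -- boundary argument
          set A := (Finset.univ : Finset (ZMod k)).filter (fun i => g i ∈ c'.support)
            with hAdef
          have hAne : A.Nonempty := by
            have hu'c : u' ∈ c.support := by
              rcases hw.vertex_cover u' with h' | h'
              · exact h'
              · exact absurd (h' ▸ c'.start_mem_support) hhubsupp
            obtain ⟨i, hi⟩ := hgsurj u' hu'c
            exact ⟨i, by
              rw [hAdef]
              simp only [Finset.mem_filter, Finset.mem_univ, true_and]
              rw [hi]
              exact c'.start_mem_support⟩
          have hstep : ∀ j ∈ A, j + 1 ∈ A := by
            intro j hjA
            by_contra hj1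
            rw [hAdef] at hjA hj1
            simp only [Finset.mem_filter, Finset.mem_univ, true_and] at hjA hj1
            have hv : g j ∈ c'.support := hjA
            -- two distinct incident edges at g j
            set c'' := c'.rotate _ hv with hc''def
            have hcyc'' : c''.IsCycle := hcyc'.rotate hv
            have hlen'' : c''.length = L := by
              have hperm := (c'.rotate_edges _ hv).perm.length_eq
              rw [Walk.length_edges, Walk.length_edges] at hperm
              exact hperm
            have hgv0 : c''.getVert 0 = g j := Walk.getVert_zero _
            have hgvL : c''.getVert L = g j := by
              rw [← hlen'']; exact Walk.getVert_length _
            have he₁ : s(c''.getVert 0, c''.getVert 1) ∈ c''.edges :=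
              walk_index_edge c'' 0 (by omega)
            have he₂ : s(c''.getVert (L - 1), c''.getVert L) ∈ c''.edges := by
              have := walk_index_edge c'' (L - 1) (by omega)
              have hL1 : L - 1 + 1 = L := by omega
              rw [hL1] at this
              exact this
            have hne : s(c''.getVert 0, c''.getVert 1) ≠
                s(c''.getVert (L - 1), c''.getVert L) := by
              intro heq
              rcases Sym2.eq_iff.mp heq with ⟨h1, h2⟩ | ⟨h1, h2⟩
              · -- getVert 1 = getVert L
                have := cycle_getVert_injOn hcyc'' 1 c''.length (by omega)
                  (by omega) (by omega) (by omega) (by rw [hlen'']; exact h2)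
                omega
              · -- getVert 1 = getVert (L-1)
                have := cycle_getVert_injOn hcyc'' 1 (L - 1) (by omega)
                  (by omega) (by omega) (by omega) h2
                omega
            have hmem₁ : s(c''.getVert 0, c''.getVert 1) ∈ c'.edges :=
              (c'.rotate_edges _ hv).mem_iff.mp he₁
            have hmem₂ : s(c''.getVert (L - 1), c''.getVert L) ∈ c'.edges :=
              (c'.rotate_edges _ hv).mem_iff.mp he₂
            -- any edge of c' through g j must be s(g (j-1), g j)
            have hforce : ∀ w₁ w₂ : V, s(w₁, w₂) ∈ c'.edges → (w₁ = g j ∨ w₂ = g j) →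
                s(w₁, w₂) = s(g (j - 1), g j) := by
              intro w₁ w₂ hmem hv12
              have hadj : G.Adj w₁ w₂ := c'.adj_of_mem_edges hmem
              have hw1 : w₁ ∈ c'.support := c'.fst_mem_support_of_mem_edges hmem
              have hw2 : w₂ ∈ c'.support := c'.snd_mem_support_of_mem_edges hmem
              have hcm : s(w₁, w₂) ∈ c.edges := by
                rcases hw.edge_cover w₁ w₂ hadj with h' | h' | h'
                · exact h'
                · exact absurd (h' ▸ hw1) hhubsupp
                · exact absurd (h' ▸ hw2) hhubsupp
              obtain ⟨m, hm⟩ := hedge _ hcm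
              -- g j is one of g (m-1), g m
              have hcases : m = j ∨ m = j + 1 := by
                rcases Sym2.eq_iff.mp hm with ⟨h1, h2⟩ | ⟨h1, h2⟩ <;>
                  rcases hv12 with hv' | hv'
                · right
                  have : g (m - 1) = g j := by rw [← h1, hv']
                  have := hginj _ _ this
                  rw [← this]; ring
                · left
                  exact hginj _ _ (by rw [← h2, hv'])
                · left
                  exact hginj _ _ (by rw [← h1, hv'])
                · right
                  have : g (m - 1) = g j := by rw [← h2, hv']
                  have := hginj _ _ this
                  rw [← this]; ring
              rcases hcases with rfl | rfl
              · exact hm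
              · -- then g (j+1) would be on c'
                exfalso
                have hj1mem : g (j + 1) ∈ c'.support := by
                  have hsimp : (j + 1 - 1 : ZMod k) = j := by ring
                  rw [hsimp] at hm
                  rcases Sym2.eq_iff.mp hm with ⟨h1, h2⟩ | ⟨h1, h2⟩
                  · exact h2 ▸ hw2
                  · exact h1 ▸ hw1
                exact hj1 hj1mem
            have h1 := hforce _ _ hmem₁ (Or.inl hgv0)
            have h2 := hforce _ _ hmem₂ (Or.inr hgvL)
            exact hne (h1.trans h2.symm)
          have hAuniv : A = Finset.univ := by
            obtain ⟨a, ha⟩ := hAne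
            have hn : ∀ n : ℕ, a + (n : ZMod k) ∈ A := by
              intro n
              induction n with
              | zero => simpa using ha
              | succ m ih =>
                have := hstep _ ih
                have hc : a + ((m + 1 : ℕ) : ZMod k) = a + (m : ℕ) + 1 := by
                  push_cast; ring
                rw [hc]
                exact this
            ext i
            simp only [Finset.mem_univ, iff_true]
            have : i = a + (((i - a).val : ℕ) : ZMod k) := by
              rw [ZMod.natCast_val, ZMod.cast_id]
              ring
            rw [this]
            exact hn _
          intro v hvR
          rw [hRdef] at hvR
          obtain ⟨i, _, rfl⟩ := Finset.mem_image.mp hvR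
          have : i ∈ A := hAuniv ▸ Finset.mem_univ i
          rw [hAdef] at this
          simp only [Finset.mem_filter, Finset.mem_univ, true_and] at this
          exact List.mem_toFinset.mpr this
        have hkL : k ≤ L := by
          calc k = R.card := hRcard.symm
            _ ≤ F.card := Finset.card_le_card hRF
            _ = L := hFcard
        have hkLR : (k : ℝ) ≤ (L : ℝ) := by exact_mod_cast hkL
        have hsum : ∑ v ∈ F, x v = L * (((k : ℝ) - 1) / (2 * k)) := by
          have hall : ∀ v ∈ F, x v = ((k : ℝ) - 1) / (2 * k) := by
            intro v hv
            simp only [hxdef]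
            refine if_neg ?_
            rintro rfl
            exact hhubF hv
          rw [Finset.sum_congr rfl hall, Finset.sum_const, hFcard, nsmul_eq_mul]
        rw [hsum, mul_div_assoc']
        rw [div_le_div_iff₀ (by positivity) (by norm_num)]
        nlinarith
  -- x is in the stable set polytope by t-perfection
  have hxstab : x ∈ stabPolytope G := by
    rw [← hTP]
    exact hxtp
  -- but the total sum separates x from the stable set polytope
  have hhalf : stabPolytope G ⊆ {y : V → ℝ | ∑ v, y v ≤ ((k : ℝ) - 1) / 2} := by
    apply convexHull_min
    · rintro y ⟨S, hSstable, rfl⟩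
      simp only [Set.mem_setOf_eq]
      have hsum : ∑ v : V, (if v ∈ S then (1 : ℝ) else 0) = S.card := by
        rw [Finset.sum_boole]
        congr 1
        rw [Finset.filter_univ_mem]
      rw [hsum, le_div_iff₀ (by norm_num)]
      have h2S := hstab S hSstable
      have : ((2 * S.card : ℕ) : ℝ) ≤ ((k - 1 : ℕ) : ℝ) := by exact_mod_cast h2S
      rw [Nat.cast_mul, Nat.cast_sub (by omega)] at this
      push_cast at this ⊢
      linarith
    · intro y hy z hz a b ha hb hab
      simp only [Set.mem_setOf_eq] at hy hz ⊢
      have : ∑ v : V, (a • y + b • z) v = a * ∑ v : V, y v + b * ∑ v : V, z v := by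
        simp only [Pi.add_apply, Pi.smul_apply, smul_eq_mul]
        rw [Finset.sum_add_distrib, Finset.mul_sum, Finset.mul_sum]
      rw [this]
      calc a * ∑ v : V, y v + b * ∑ v : V, z v
          ≤ a * (((k : ℝ) - 1) / 2) + b * (((k : ℝ) - 1) / 2) := by
            apply add_le_add <;> apply mul_le_mul_of_nonneg_left <;> assumption
        _ = ((k : ℝ) - 1) / 2 := by rw [← add_mul, hab, one_mul]
  have hxle : ∑ v, x v ≤ ((k : ℝ) - 1) / 2 := hhalf hxstab
  -- compute the sum of x
  have hsumx : ∑ v, x v = ((k : ℝ) - 1) / 2 + 1 / k := by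
    rw [hunivR, Finset.sum_insert hhubR]
    have hxhub : x hub = 1 / (k : ℝ) := by simp [hxdef]
    have hother : ∀ v ∈ R, x v = ((k : ℝ) - 1) / (2 * k) := by
      intro v hv
      simp only [hxdef]
      refine if_neg ?_
      rintro rfl
      exact hhubR hv
    rw [hxhub, Finset.sum_congr rfl hother, Finset.sum_const, hRcard, nsmul_eq_mul]
    have hkne : (k : ℝ) ≠ 0 := by linarith
    field_simp
    ring
  rw [hsumx] at hxle
  have : (0 : ℝ) < 1 / k := by positivity
  linarith


end TPerfection
end

section
/- Every perfect finite simple graph is h-perfect. -/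
open Finset SimpleGraph

namespace TPerfection

variable {V : Type*}

section Aux

open scoped Classical

variable {V : Type*}

private lemma walk_support_getElem? {G : SimpleGraph V} {u v : V} (p : G.Walk u v) :
    ∀ i, i ≤ p.length → p.support[i]? = some (p.getVert i) := by
  induction p with
  | nil =>
      intro i hi
      simp only [SimpleGraph.Walk.length_nil, Nat.le_zero] at hi
      subst hi
      simp
  | cons h q ih =>
      intro i hi
      cases i with
      | zero => simp
      | succ n =>
          simp only [SimpleGraph.Walk.support_cons, List.getElem?_cons_succ,
            SimpleGraph.Walk.getVert_cons_succ]
          exact ih n (by simpa using hi)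

private lemma cycle_getVert_inj {G : SimpleGraph V} {u : V} {c : G.Walk u u} (hc : c.IsCycle) :
    ∀ i j, i < c.length → j < c.length → c.getVert i = c.getVert j → i = j := by
  have hnd := hc.support_nodup
  have hcons : c.support = u :: c.support.tail := c.support_eq_cons
  have htl : c.support.tail.length = c.length := by
    have h1 := c.length_support
    rw [hcons] at h1
    simp only [List.length_cons] at h1
    omega
  have hget : ∀ m, m < c.length → c.support.tail[m]? = some (c.getVert (m + 1)) := by
    intro m hm
    have h1 := walk_support_getElem? c (m + 1) (by omega)
    rw [hcons, List.getElem?_cons_succ] at h1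
    exact h1
  have key0 : ∀ j, 0 < j → j < c.length → c.getVert 0 = c.getVert j → False := by
    intro j hj0 hj hij
    have hl : 0 < c.length := by omega
    have h1 := hget (j - 1) (by omega)
    have h2 := hget (c.length - 1) (by omega)
    rw [Nat.sub_add_cancel hj0] at h1
    rw [Nat.sub_add_cancel hl, SimpleGraph.Walk.getVert_length] at h2
    rw [← hij, SimpleGraph.Walk.getVert_zero] at h1
    have := (List.getElem?_inj (by omega : j - 1 < c.support.tail.length) hnd).mp
      (h1.trans h2.symm)
    omega
  intro i j hi hj hij
  rcases Nat.eq_zero_or_pos i with rfl | hi0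
  · rcases Nat.eq_zero_or_pos j with rfl | hj0
    · rfl
    · exact absurd hij (fun h => key0 j hj0 hj h)
  · rcases Nat.eq_zero_or_pos j with rfl | hj0
    · exact absurd hij.symm (fun h => key0 i hi0 hi h)
    · have h1 := hget (i - 1) (by omega)
      have h2 := hget (j - 1) (by omega)
      rw [Nat.sub_add_cancel hi0] at h1
      rw [Nat.sub_add_cancel hj0] at h2
      rw [hij] at h1
      have := (List.getElem?_inj (by omega : i - 1 < c.support.tail.length) hnd).mp
        (h1.trans h2.symm)
      omega

private lemma stable_cycle_card_bound {G : SimpleGraph V} [DecidableEq V] {S : Finset V}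
    (hS : IsStableSet G S) {u : V} {c : G.Walk u u} (hc : c.IsCycle) (hodd : Odd c.length) :
    2 * (c.support.toFinset ∩ S).card + 1 ≤ c.length := by
  have hl3 : 3 ≤ c.length := hc.three_le_length
  set ℓ := c.length with hℓ
  set f : Fin ℓ → V := fun i => c.getVert i.1 with hf
  have hinj : Function.Injective f := by
    intro i j hij
    exact Fin.ext (cycle_getVert_inj hc i.1 j.1 i.2 j.2 hij)
  have himg : c.support.toFinset = Finset.image f Finset.univ := by
    ext v
    simp only [List.mem_toFinset, Finset.mem_image, Finset.mem_univ, true_and]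
    constructor
    · intro hv
      obtain ⟨n, hn, hnle⟩ := SimpleGraph.Walk.mem_support_iff_exists_getVert.mp hv
      rcases Nat.lt_or_ge n ℓ with h | h
      · exact ⟨⟨n, h⟩, hn⟩
      · have hne : n = ℓ := le_antisymm hnle h
        refine ⟨⟨0, by omega⟩, ?_⟩
        have h2 : c.getVert n = u := by rw [hne]; exact c.getVert_length
        show c.getVert 0 = v
        rw [c.getVert_zero, ← h2, hn]
    · rintro ⟨i, rfl⟩
      exact SimpleGraph.Walk.mem_support_iff_exists_getVert.mpr ⟨i.1, rfl, le_of_lt i.2⟩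
  set I := Finset.univ.filter (fun i : Fin ℓ => f i ∈ S) with hI
  have hkey : (c.support.toFinset ∩ S).card = I.card := by
    rw [himg]
    have h1 : Finset.image f Finset.univ ∩ S
        = (Finset.image f Finset.univ).filter (fun v => v ∈ S) := by
      ext v; simp [Finset.mem_filter, Finset.mem_inter]
    rw [h1, Finset.filter_image, Finset.card_image_of_injective _ hinj]
  set r : Fin ℓ → Fin ℓ := fun i => ⟨(i.1 + 1) % ℓ, Nat.mod_lt _ (by omega)⟩ with hr
  have hradj : ∀ i, G.Adj (f i) (f (r i)) := by
    intro i
    rcases Nat.lt_or_ge (i.1 + 1) ℓ with h | h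
    · have hmod : (i.1 + 1) % ℓ = i.1 + 1 := Nat.mod_eq_of_lt h
      show G.Adj (c.getVert i.1) (c.getVert ((i.1 + 1) % ℓ))
      rw [hmod]
      exact c.adj_getVert_succ (by omega)
    · have h1 : i.1 + 1 = ℓ := by omega
      have hmod : (i.1 + 1) % ℓ = 0 := by rw [h1]; exact Nat.mod_self ℓ
      show G.Adj (c.getVert i.1) (c.getVert ((i.1 + 1) % ℓ))
      rw [hmod]
      have h2 := c.adj_getVert_succ (show i.1 < c.length by omega)
      have h3 : c.getVert (i.1 + 1) = c.getVert 0 := by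
        rw [c.getVert_zero, h1]
        exact c.getVert_length
      rwa [h3] at h2
  have hrinj : Function.Injective r := by
    intro a b hab
    have hval : (a.1 + 1) % ℓ = (b.1 + 1) % ℓ := congrArg Fin.val hab
    have ha := a.2
    have hb := b.2
    have hmod : ∀ n : ℕ, n < ℓ → (n + 1) % ℓ = if n + 1 = ℓ then 0 else n + 1 := by
      intro n hn
      by_cases h : n + 1 = ℓ
      · rw [if_pos h, h, Nat.mod_self]
      · rw [if_neg h, Nat.mod_eq_of_lt (by omega)]
    rw [hmod a.1 ha, hmod b.1 hb] at hval
    apply Fin.ext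
    split_ifs at hval <;> omega
  have hsub : Finset.image r I ⊆ Finset.univ \ I := by
    intro j hj
    obtain ⟨i, hiI, rfl⟩ := Finset.mem_image.mp hj
    simp only [hI, Finset.mem_filter, Finset.mem_univ, true_and] at hiI
    simp only [Finset.mem_sdiff, Finset.mem_univ, true_and]
    intro hri
    rw [hI, Finset.mem_filter] at hri
    exact hS _ hiI _ hri.2 (hradj i)
  have h1 : I.card ≤ ℓ - I.card := by
    have h2 : (Finset.image r I).card = I.card := Finset.card_image_of_injective _ hrinj
    have h3 := Finset.card_le_card hsub
    rw [h2, Finset.card_sdiff_of_subset (Finset.subset_univ _)] at h3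
    simpa [Finset.card_univ] using h3
  obtain ⟨m, hm⟩ := hodd
  have h4 : I.card ≤ Fintype.card (Fin ℓ) := Finset.card_le_card (Finset.subset_univ I) |>.trans
    (by rw [Finset.card_univ])
  rw [hkey]
  simp only [Fintype.card_fin] at h4
  omega

end Aux

section AuxA

open scoped Classical

variable {V : Type*}

private lemma empty_stable (G : SimpleGraph V) : IsStableSet G (∅ : Finset V) := by
  intro u hu
  exact absurd hu (Finset.notMem_empty u)

private lemma indicator_mem_hPolytope {G : SimpleGraph V} [Fintype V] [DecidableEq V]
    {S : Finset V} (hS : IsStableSet G S) :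
    (fun v => if v ∈ S then (1 : ℝ) else 0) ∈ hPolytope G := by
  refine ⟨?_, ?_, ?_⟩
  · intro v
    by_cases h : v ∈ S <;> simp [h]
  · intro K hK
    rw [Finset.sum_ite_mem, Finset.sum_const, nsmul_eq_mul, mul_one]
    have hcard : (K ∩ S).card ≤ 1 := by
      rw [Finset.card_le_one]
      intro a ha b hb
      rw [Finset.mem_inter] at ha hb
      by_contra hne
      exact hS a ha.2 b hb.2 (hK (Finset.mem_coe.mpr ha.1) (Finset.mem_coe.mpr hb.1) hne)
    exact_mod_cast hcard
  · intro u c hc hodd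
    have hb := stable_cycle_card_bound hS hc.1 hodd
    rw [Finset.sum_ite_mem, Finset.sum_const, nsmul_eq_mul, mul_one]
    rw [le_div_iff₀ (by norm_num : (0:ℝ) < 2)]
    have h1 : (2 * (c.support.toFinset ∩ S).card + 1 : ℝ) ≤ (c.length : ℝ) := by
      exact_mod_cast hb
    linarith

private lemma convex_hPolytope {G : SimpleGraph V} [Fintype V] [DecidableEq V] :
    Convex ℝ (hPolytope G) := by
  intro x hx y hy a b ha hb hab
  obtain ⟨hxb, hxc, hxo⟩ := hx
  obtain ⟨hyb, hyc, hyo⟩ := hy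
  have happ : ∀ v, (a • x + b • y) v = a * x v + b * y v := by
    intro v; simp [smul_eq_mul]
  refine ⟨?_, ?_, ?_⟩
  · intro v
    rw [happ]
    obtain ⟨h1, h2⟩ := hxb v
    obtain ⟨h3, h4⟩ := hyb v
    constructor
    · have := add_nonneg (mul_nonneg ha h1) (mul_nonneg hb h3)
      linarith
    · nlinarith
  · intro K hK
    have h1 := hxc K hK
    have h2 := hyc K hK
    calc ∑ v ∈ K, (a • x + b • y) v = a * ∑ v ∈ K, x v + b * ∑ v ∈ K, y v := by
          rw [Finset.mul_sum, Finset.mul_sum, ← Finset.sum_add_distrib]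
          exact Finset.sum_congr rfl fun v _ => happ v
      _ ≤ a * 1 + b * 1 := add_le_add (mul_le_mul_of_nonneg_left h1 ha)
          (mul_le_mul_of_nonneg_left h2 hb)
      _ = 1 := by linarith
  · intro u c hc hodd
    have h1 := hxo u c hc hodd
    have h2 := hyo u c hc hodd
    calc ∑ v ∈ c.support.toFinset, (a • x + b • y) v
        = a * ∑ v ∈ c.support.toFinset, x v + b * ∑ v ∈ c.support.toFinset, y v := by
          rw [Finset.mul_sum, Finset.mul_sum, ← Finset.sum_add_distrib]
          exact Finset.sum_congr rfl fun v _ => happ v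
      _ ≤ a * (((c.length : ℝ) - 1) / 2) + b * (((c.length : ℝ) - 1) / 2) :=
          add_le_add (mul_le_mul_of_nonneg_left h1 ha) (mul_le_mul_of_nonneg_left h2 hb)
      _ = (a + b) * (((c.length : ℝ) - 1) / 2) := by ring
      _ = ((c.length : ℝ) - 1) / 2 := by rw [hab, one_mul]

private lemma stab_subset_hPolytope {G : SimpleGraph V} [Fintype V] [DecidableEq V] :
    stabPolytope G ⊆ hPolytope G := by
  apply convexHull_min ?_ convex_hPolytope
  rintro x ⟨S, hS, rfl⟩
  exact indicator_mem_hPolytope hS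

end AuxA

section AuxB

open scoped Classical

variable {V : Type*}

private noncomputable def mcw (G : SimpleGraph V) [Fintype V] (w : V → ℕ) : ℕ :=
  Finset.univ.powerset.sup fun K => if G.IsClique (K : Set V) then ∑ v ∈ K, w v else 0

private lemma sum_le_mcw {G : SimpleGraph V} [Fintype V] {w : V → ℕ} {K : Finset V}
    (hK : G.IsClique (K : Set V)) : ∑ v ∈ K, w v ≤ mcw G w := by
  have h := Finset.le_sup (f := fun K : Finset V =>
      if G.IsClique (K : Set V) then ∑ v ∈ K, w v else 0)
    (Finset.mem_powerset.mpr (Finset.subset_univ K))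
  simp only [if_pos hK] at h
  exact h

private lemma mcw_le {G : SimpleGraph V} [Fintype V] {w : V → ℕ} {m : ℕ}
    (h : ∀ K : Finset V, G.IsClique (K : Set V) → ∑ v ∈ K, w v ≤ m) : mcw G w ≤ m := by
  apply Finset.sup_le
  intro K _
  split_ifs with hK
  · exact h K hK
  · exact Nat.zero_le m

private lemma mcw_mono {G : SimpleGraph V} [Fintype V] {w w' : V → ℕ} (h : ∀ v, w v ≤ w' v) :
    mcw G w ≤ mcw G w' :=
  mcw_le fun _ hK => le_trans (Finset.sum_le_sum fun v _ => h v) (sum_le_mcw hK)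

private lemma exists_stable_cover {V : Type*} [Fintype V] [DecidableEq V] {G : SimpleGraph V}
    (hG : IsPerfect G) :
    ∀ (n : ℕ) (w : V → ℕ), (∑ v, w v) ≤ n →
      ∃ (s : ℕ) (F : ℕ → Finset V), s ≤ mcw G w ∧ (∀ i, i < s → IsStableSet G (F i)) ∧
        ∀ v, (∑ i ∈ Finset.range s, if v ∈ F i then 1 else 0) = w v := by
  intro n
  induction n with
  | zero =>
      intro w hw
      refine ⟨0, fun _ => ∅, Nat.zero_le _, fun i hi => absurd hi (Nat.not_lt_zero i), ?_⟩
      intro v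
      have h0 : w v = 0 :=
        Finset.sum_eq_zero_iff.mp (Nat.le_zero.mp hw) v (Finset.mem_univ v)
      simp [h0]
  | succ n ih =>
      intro w hw
      by_cases hsmall : ∀ v, w v ≤ 1
      · -- 0/1 weights: use perfection directly
        set Su : Set V := {v | w v ≠ 0} with hSu
        set t := mcw G w with htdef
        have hcn : cliqueNumber (G.induce Su) ≤ (t : ℕ∞) := by
          apply sSup_le
          rintro a ⟨m, ⟨K, hK⟩, rfl⟩
          simp only [Nat.cast_le]
          set K' : Finset V := K.map (Function.Embedding.subtype _) with hK'
          have hK1 : G.IsClique (K' : Set V) := by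
            intro x hx y hy hxy
            rw [Finset.mem_coe, hK', Finset.mem_map] at hx hy
            obtain ⟨x', hx', rfl⟩ := hx
            obtain ⟨y', hy', rfl⟩ := hy
            have hne : x' ≠ y' := by
              intro hcontra; exact hxy (by rw [hcontra])
            have := hK.1 (Finset.mem_coe.mpr hx') (Finset.mem_coe.mpr hy') hne
            exact this
          have hsum : ∑ v ∈ K', w v = m := by
            rw [hK', Finset.sum_map]
            have hone : ∀ x' ∈ K, w ((Function.Embedding.subtype _) x') = 1 := by
              intro x' _
              have h1 : w (x'.1) ≠ 0 := x'.2
              have := hsmall (x' : V)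
              simp only [Function.Embedding.coe_subtype]
              omega
            rw [Finset.sum_congr rfl hone, Finset.sum_const, smul_eq_mul, mul_one, hK.2]
          calc m = ∑ v ∈ K', w v := hsum.symm
            _ ≤ t := sum_le_mcw hK1
        have hcol : (G.induce Su).Colorable t := by
          rw [← SimpleGraph.chromaticNumber_le_iff_colorable, hG Su]
          exact hcn
        obtain ⟨C⟩ := hcol
        refine ⟨t, fun i => Finset.univ.filter
          (fun v => ∃ hv : v ∈ Su, ((C ⟨v, hv⟩ : Fin t) : ℕ) = i), le_rfl, ?_, ?_⟩
        · intro i _ x hx y hy hadj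
          rw [Finset.mem_filter] at hx hy
          obtain ⟨hxS, hx2⟩ := hx.2
          obtain ⟨hyS, hy2⟩ := hy.2
          have hne : (⟨x, hxS⟩ : Su) ≠ ⟨y, hyS⟩ := by
            intro hcontra
            have : x = y := congrArg Subtype.val hcontra
            exact G.loopless.irrefl x (this ▸ hadj)
          have hadj' : (G.induce Su).Adj ⟨x, hxS⟩ ⟨y, hyS⟩ := by
            simp only [SimpleGraph.comap_adj, Function.Embedding.coe_subtype]
            exact hadj
          exact C.valid hadj' (Fin.val_injective (hx2.trans hy2.symm))
        · intro v
          by_cases hv : v ∈ Su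
          · have hw1 : w v = 1 := by
              rw [hSu, Set.mem_setOf_eq] at hv
              have := hsmall v
              omega
            rw [hw1]
            have hmem : ∀ i : ℕ, (v ∈ Finset.univ.filter
                (fun v => ∃ hv : v ∈ Su, ((C ⟨v, hv⟩ : Fin t) : ℕ) = i))
                ↔ ((C ⟨v, hv⟩ : Fin t) : ℕ) = i := by
              intro i
              rw [Finset.mem_filter]
              constructor
              · rintro ⟨-, hv', h⟩; exact h
              · intro h; exact ⟨Finset.mem_univ v, hv, h⟩
            calc ∑ i ∈ Finset.range t, (if v ∈ Finset.univ.filter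
                  (fun v => ∃ hv : v ∈ Su, ((C ⟨v, hv⟩ : Fin t) : ℕ) = i) then 1 else 0)
                = ∑ i ∈ Finset.range t,
                    (if ((C ⟨v, hv⟩ : Fin t) : ℕ) = i then 1 else 0) :=
                  Finset.sum_congr rfl fun i _ => by
                    by_cases h : ((C ⟨v, hv⟩ : Fin t) : ℕ) = i
                    · rw [if_pos ((hmem i).mpr h), if_pos h]
                    · rw [if_neg (fun hc => h ((hmem i).mp hc)), if_neg h]
              _ = 1 := by
                  rw [Finset.sum_ite_eq]
                  rw [if_pos (Finset.mem_range.mpr (C ⟨v, hv⟩).isLt)]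
          · have hw0 : w v = 0 := by
              rw [hSu, Set.mem_setOf_eq, not_not] at hv
              exact hv
            rw [hw0]
            apply Finset.sum_eq_zero
            intro i _
            rw [if_neg]
            rw [Finset.mem_filter]
            rintro ⟨-, hv', -⟩
            exact hv hv'
      · -- some vertex has weight ≥ 2
        push_neg at hsmall
        obtain ⟨v₀, hv₀⟩ := hsmall
        set t := mcw G w with htdef
        have ht2 : 2 ≤ t := by
          have hcl : G.IsClique (({v₀} : Finset V) : Set V) := by
            rw [Finset.coe_singleton]
            exact Set.pairwise_singleton v₀ G.Adj
          have := sum_le_mcw (w := w) hcl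
          rw [Finset.sum_singleton] at this
          omega
        set w' : V → ℕ := Function.update w v₀ (w v₀ - 1) with hw'
        have hw'le : ∀ v, w' v ≤ w v := by
          intro v
          rw [hw', Function.update_apply]
          split_ifs with h
          · subst h; omega
          · exact le_rfl
        have hw'v₀ : w' v₀ = w v₀ - 1 := by rw [hw', Function.update_self]
        have hw'sum : ∑ v, w' v ≤ n := by
          have h1 : ∑ v, w' v < ∑ v, w v :=
            Finset.sum_lt_sum (fun v _ => hw'le v)
              ⟨v₀, Finset.mem_univ _, by rw [hw'v₀]; omega⟩
          omega
        obtain ⟨s', F', hs', hstab', hcov'⟩ := ih w' hw'sum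
        have hs't : s' ≤ t := le_trans hs' (mcw_mono hw'le)
        have hex : ∃ j ∈ Finset.range s', v₀ ∈ F' j := by
          by_contra hcon
          push_neg at hcon
          have h1 := hcov' v₀
          rw [Finset.sum_eq_zero (fun i hi => if_neg (hcon i hi))] at h1
          rw [hw'v₀] at h1
          omega
        obtain ⟨j, hjs, hjA⟩ := hex
        set A := F' j with hA
        have hAstab : IsStableSet G A := hstab' j (Finset.mem_range.mp hjs)
        have hwA : ∀ v ∈ A, 1 ≤ w v := by
          intro v hv
          have h1 := hcov' v
          have h2 : (1 : ℕ) ≤ ∑ i ∈ Finset.range s', if v ∈ F' i then 1 else 0 := by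
            calc (1:ℕ) = if v ∈ F' j then 1 else 0 := (if_pos hv).symm
              _ ≤ _ := Finset.single_le_sum (f := fun i => if v ∈ F' i then (1:ℕ) else 0)
                (fun i _ => Nat.zero_le _) hjs
          have h3 := hw'le v
          omega
        have hkeyA : ∀ K : Finset V, G.IsClique (K : Set V) → ∑ v ∈ K, w v = t →
            (K ∩ A).Nonempty := by
          intro K hK hKt
          by_cases hvK : v₀ ∈ K
          · exact ⟨v₀, Finset.mem_inter.mpr ⟨hvK, hjA⟩⟩
          · have hsum' : ∑ v ∈ K, w' v = t := by
              rw [← hKt]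
              apply Finset.sum_congr rfl
              intro v hvK'
              rw [hw', Function.update_apply, if_neg]
              intro hcontra
              exact hvK (hcontra ▸ hvK')
            have hcardsum : ∀ i : ℕ, (K ∩ F' i).card = ∑ v ∈ K, if v ∈ F' i then 1 else 0 := by
              intro i
              rw [Finset.sum_ite_mem, Finset.sum_const, smul_eq_mul, mul_one]
            have hdc : ∑ i ∈ Finset.range s', (K ∩ F' i).card = t := by
              rw [Finset.sum_congr rfl fun i _ => hcardsum i, Finset.sum_comm]
              rw [Finset.sum_congr rfl fun v _ => hcov' v]
              exact hsum'
            have hle1 : ∀ i ∈ Finset.range s', (K ∩ F' i).card ≤ 1 := by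
              intro i hi
              rw [Finset.card_le_one]
              intro a ha b hb
              rw [Finset.mem_inter] at ha hb
              by_contra hne
              exact hstab' i (Finset.mem_range.mp hi) a ha.2 b hb.2
                (hK (Finset.mem_coe.mpr ha.1) (Finset.mem_coe.mpr hb.1) hne)
            have hj1 : 1 ≤ (K ∩ A).card := by
              by_contra hcon
              push_neg at hcon
              have h0 : (K ∩ A).card = 0 := by omega
              have h2 : ∑ i ∈ (Finset.range s').erase j, (K ∩ F' i).card + (K ∩ A).card
                  = ∑ i ∈ Finset.range s', (K ∩ F' i).card :=
                Finset.sum_erase_add (Finset.range s') (fun i => (K ∩ F' i).card) hjs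
              have h3 : ∑ i ∈ (Finset.range s').erase j, (K ∩ F' i).card
                  ≤ ((Finset.range s').erase j).card • 1 :=
                Finset.sum_le_card_nsmul _ _ 1
                  (fun i hi => hle1 i (Finset.mem_of_mem_erase hi))
              rw [Finset.card_erase_of_mem hjs, Finset.card_range, smul_eq_mul, mul_one] at h3
              omega
            exact Finset.card_pos.mp (by omega)
        set uw : V → ℕ := fun v => w v - (if v ∈ A then 1 else 0) with huwdef
        have huww : ∀ v, uw v + (if v ∈ A then 1 else 0) = w v := by
          intro v
          by_cases h : v ∈ A
          · have := hwA v h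
            simp only [huwdef, if_pos h]
            omega
          · simp [huwdef, h]
        have husum : ∑ v, uw v ≤ n := by
          have h1 : ∑ v, uw v < ∑ v, w v :=
            Finset.sum_lt_sum (fun v _ => by have := huww v; omega)
              ⟨v₀, Finset.mem_univ _, by have := huww v₀; rw [if_pos hjA] at this; omega⟩
          omega
        have humcw : mcw G uw ≤ t - 1 := by
          apply mcw_le
          intro K hK
          have h1 : ∑ v ∈ K, w v ≤ t := sum_le_mcw hK
          have h2 : ∑ v ∈ K, uw v + ∑ v ∈ K, (if v ∈ A then 1 else 0) = ∑ v ∈ K, w v := by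
            rw [← Finset.sum_add_distrib]
            exact Finset.sum_congr rfl fun v _ => huww v
          rcases eq_or_lt_of_le h1 with heq | hlt
          · obtain ⟨a, ha⟩ := hkeyA K hK heq
            rw [Finset.mem_inter] at ha
            have h4 : (1:ℕ) ≤ ∑ v ∈ K, (if v ∈ A then 1 else 0) := by
              calc (1:ℕ) = if a ∈ A then 1 else 0 := (if_pos ha.2).symm
                _ ≤ _ := Finset.single_le_sum (f := fun v => if v ∈ A then (1:ℕ) else 0)
                  (fun i _ => Nat.zero_le _) ha.1
            omega
          · omega
        obtain ⟨s'', F'', hs'', hstab'', hcov''⟩ := ih uw husum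
        refine ⟨s'' + 1, fun i => Nat.casesOn i A (fun k => F'' k), ?_, ?_, ?_⟩
        · have := le_trans hs'' humcw
          omega
        · intro i hi
          cases i with
          | zero => exact hAstab
          | succ k => exact hstab'' k (by omega)
        · intro v
          rw [Finset.sum_range_succ']
          show (∑ i ∈ Finset.range s'', if v ∈ F'' i then 1 else 0)
            + (if v ∈ A then 1 else 0) = w v
          rw [hcov'' v]
          exact huww v

end AuxB

section AuxC

open scoped Classical

variable {V : Type*}

private lemma scaled_mem_stab [Fintype V] [DecidableEq V] {G : SimpleGraph V}
    (hG : IsPerfect G) (w : V → ℕ) (N : ℕ) (hN : 0 < N)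
    (hw : ∀ K : Finset V, G.IsClique (K : Set V) → ∑ v ∈ K, w v ≤ N) :
    (fun v => (w v : ℝ) / N) ∈ stabPolytope G := by
  obtain ⟨s, F, hs, hstab, hcov⟩ := exists_stable_cover hG (∑ v, w v) w le_rfl
  have hsN : s ≤ N := le_trans hs (mcw_le hw)
  set Fa : ℕ → Finset V := fun i => if i < s then F i else ∅ with hFa
  have hFastab : ∀ i : ℕ, IsStableSet G (Fa i) := by
    intro i
    rw [hFa]
    dsimp only
    split_ifs with h
    · exact hstab i h
    · exact empty_stable G
  have hcova : ∀ v, (∑ i ∈ Finset.range s, if v ∈ Fa i then 1 else 0) = w v := by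
    intro v
    rw [← hcov v]
    apply Finset.sum_congr rfl
    intro i hi
    rw [hFa]
    dsimp only
    simp only [if_pos (Finset.mem_range.mp hi)]
  set z : Fin N → (V → ℝ) := fun i => fun v => if v ∈ Fa i.1 then (1:ℝ) else 0 with hz
  have hcm := Finset.centerMass_mem_convexHull (t := (Finset.univ : Finset (Fin N)))
    (w := fun _ => (1:ℝ)) (z := z)
    (fun i _ => zero_le_one)
    (by
      rw [Finset.sum_const, Finset.card_univ, Fintype.card_fin, nsmul_eq_mul, mul_one]
      exact_mod_cast hN)
    (fun i _ => (by
      exact ⟨Fa i.1, hFastab i.1, rfl⟩ :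
      z i ∈ { x : V → ℝ | ∃ S : Finset V, IsStableSet G S ∧
        x = fun v => if v ∈ S then (1 : ℝ) else 0 }))
  have heq : Finset.univ.centerMass (fun _ : Fin N => (1:ℝ)) z
      = fun v => (w v : ℝ) / N := by
    rw [Finset.centerMass]
    rw [Finset.sum_const, Finset.card_univ, Fintype.card_fin, nsmul_eq_mul, mul_one]
    funext v
    rw [Pi.smul_apply, smul_eq_mul]
    have h2 : (∑ i : Fin N, (1:ℝ) • z i) v = ∑ i : Fin N, z i v := by
      rw [Finset.sum_apply]
      exact Finset.sum_congr rfl fun i _ => by rw [one_smul]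
    rw [h2]
    have h3 : ∑ i : Fin N, z i v = (w v : ℝ) := by
      rw [hz]
      dsimp only
      rw [Fin.sum_univ_eq_sum_range (fun i => if v ∈ Fa i then (1:ℝ) else 0) N]
      rw [← Finset.sum_subset (Finset.range_subset_range.mpr hsN) (by
        intro i _ his
        have hsi : ¬ i < s := by simpa using his
        have hFe : Fa i = ∅ := by rw [hFa]; dsimp only; rw [if_neg hsi]
        rw [hFe]
        simp)]
      rw [← hcova v]
      rw [Nat.cast_sum]
      apply Finset.sum_congr rfl
      intro i _
      split_ifs <;> simp
    rw [h3, eq_comm, div_eq_inv_mul]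
  rw [← heq]
  exact hcm

end AuxC

/-- Every perfect finite simple graph is h-perfect. -/
theorem hPerfect_of_isPerfect {V : Type*} [Fintype V] [DecidableEq V]
    (G : SimpleGraph V) (h : IsPerfect G) :
    HPerfect G := by
  apply Set.Subset.antisymm
  · -- hPolytope ⊆ stabPolytope
    intro x hx
    obtain ⟨hbox, hclique, -⟩ := hx
    have hfin : { y : V → ℝ | ∃ S : Finset V, IsStableSet G S ∧
        y = fun v => if v ∈ S then (1 : ℝ) else 0 }.Finite := by
      apply Set.Finite.subset
        (Set.finite_range (fun S : Finset V => fun v => if v ∈ S then (1:ℝ) else 0))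
      rintro y ⟨S, -, rfl⟩
      exact ⟨S, rfl⟩
    have hclosed : IsClosed (stabPolytope G) := hfin.isClosed_convexHull (𝕜 := ℝ)
    rw [← hclosed.closure_eq]
    rw [Metric.mem_closure_iff]
    intro ε hε
    obtain ⟨N, hN⟩ := exists_nat_gt (1 / ε)
    have h1ε : (0:ℝ) < 1 / ε := by positivity
    have hN0 : 0 < N := by exact_mod_cast h1ε.trans hN
    have hNR : (0:ℝ) < N := by exact_mod_cast hN0
    have hNε : 1 / (N:ℝ) < ε := by
      rw [div_lt_iff₀ hNR]
      have h2 : 1 < (N:ℝ) * ε := by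
        have := (div_lt_iff₀ hε).mp hN
        linarith
      linarith
    set w : V → ℕ := fun v => ⌊x v * N⌋₊ with hwdef
    have hxnn : ∀ v, 0 ≤ x v := fun v => (hbox v).1
    have hfl : ∀ v, ((w v : ℝ)) ≤ x v * N := by
      intro v
      exact Nat.floor_le (mul_nonneg (hxnn v) (Nat.cast_nonneg N))
    have hfl2 : ∀ v, x v * N < (w v : ℝ) + 1 := fun v => Nat.lt_floor_add_one _
    have hwk : ∀ K : Finset V, G.IsClique (K : Set V) → ∑ v ∈ K, w v ≤ N := by
      intro K hK
      have h1 : ((∑ v ∈ K, w v : ℕ) : ℝ) ≤ ∑ v ∈ K, x v * N := by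
        rw [Nat.cast_sum]
        exact Finset.sum_le_sum fun v _ => hfl v
      have h2 : ∑ v ∈ K, x v * N = (∑ v ∈ K, x v) * N := (Finset.sum_mul _ _ _).symm
      have h3 : (∑ v ∈ K, x v) * N ≤ 1 * N :=
        mul_le_mul_of_nonneg_right (hclique K hK) (Nat.cast_nonneg N)
      have h4 : ((∑ v ∈ K, w v : ℕ) : ℝ) ≤ (N:ℝ) := by
        rw [h2] at h1
        linarith
      exact_mod_cast h4
    refine ⟨fun v => (w v : ℝ) / N, scaled_mem_stab h w N hN0 hwk, ?_⟩
    rw [dist_pi_lt_iff hε]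
    intro v
    rw [Real.dist_eq]
    have hle : (w v : ℝ) / N ≤ x v := by
      rw [div_le_iff₀ hNR]
      exact hfl v
    have hlt : x v - (w v : ℝ) / N < 1 / N := by
      have h5 : x v < ((w v : ℝ) + 1) / N := by
        rw [lt_div_iff₀ hNR]
        exact hfl2 v
      have h6 : ((w v : ℝ) + 1) / N = (w v : ℝ) / N + 1 / N := add_div _ _ _
      linarith
    rw [abs_sub_lt_iff]
    constructor
    · linarith
    · linarith
  · exact stab_subset_hPolytope

end TPerfection
end
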